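/- Let G' be a connected graph and x, v vertices of G' with N_{G'}[x] ⊆ N_{G'}[v]. Let T be a search tree on G = G' − x and let i be an integer with 0 ≤ i ≤ d_{T,v}. Then the tree T(i,x,v), obtained by inserting x at depth i along the root-to-v path of T, is a search tree on G'. -/

import Mathlib

open scoped Classical

universe u

variable {V : Type u}

/-- A rooted tree structure on a support set: data only, well-formedness is `RTree.WF`. -/
structure RTree (V : Type u) where
  supp : Set V
  root : V
  parent : V → Option V

namespace RTree

def parentRel (T : RTree V) (a b : V) : Prop := T.parent a = some b

/-- `u` is an ancestor of `v` in `T` (reflexively). -/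
def isAncestor (T : RTree V) (u v : V) : Prop :=
  Relation.ReflTransGen T.parentRel v u

def WF (T : RTree V) : Prop :=
  T.root ∈ T.supp ∧
  T.parent T.root = none ∧
  (∀ v, v ∉ T.supp → T.parent v = none) ∧
  (∀ v ∈ T.supp, v ≠ T.root → ∃ u ∈ T.supp, T.parent v = some u) ∧
  (∀ v ∈ T.supp, T.isAncestor T.root v)

/-- The vertex set of the subtree `T|c` rooted at `c`. -/
def descendants (T : RTree V) (c : V) : Set V :=
  {v | v ∈ T.supp ∧ T.isAncestor c v}

/-- Iterated parent. -/
def pIter (T : RTree V) : ℕ → V → Option V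
  | 0, w => some w
  | n + 1, w => (T.parent w).bind (T.pIter n)

/-- The depth `d_{T,v}` of `v` in `T` (distance to the root). -/
noncomputable def depthOf (T : RTree V) (v : V) : ℕ :=
  sInf {n | T.pIter n v = some T.root}

/-- The subtree of `T` rooted at `c`. -/
noncomputable def subtreeAt (T : RTree V) (c : V) : RTree V where
  supp := T.descendants c
  root := c
  parent := fun w => if w = c then none else if w ∈ T.descendants c then T.parent w else none

/-- The vertex at depth `i` on the path from the root to `v`. -/
noncomputable def ancAt (T : RTree V) (v : V) (i : ℕ) : V :=
  (T.pIter (T.depthOf v - i) v).getD T.root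

/-- Insertion `T(i,x,v)` of a new vertex `x` at depth `i` along the root-to-`v` path:
`i = 0` makes `x` the new root, `i = d_{T,v}+1` adds `x` as a new child of `v`, and
for `1 ≤ i ≤ d_{T,v}` the `i`-th edge of the root-to-`v` path is subdivided by `x`. -/
noncomputable def insertAt (T : RTree V) (i : ℕ) (x v : V) : RTree V :=
  if i = 0 then
    { supp := insert x T.supp
      root := x
      parent := fun w => if w = x then none else if w = T.root then some x else T.parent w }
  else if i = T.depthOf v + 1 then
    { supp := insert x T.supp
      root := T.root
      parent := fun w => if w = x then some v else T.parent w }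
  else
    { supp := insert x T.supp
      root := T.root
      parent := fun w =>
        if w = x then some (T.ancAt v (i - 1))
        else if w = T.ancAt v i then some x
        else T.parent w }

/-- Elimination `p(T,x)` of a vertex `x` (meaningful when `x` has at most one child). -/
noncomputable def elim (T : RTree V) (x : V) : RTree V where
  supp := T.supp \ {x}
  root :=
    if T.root = x then (if h : ∃ w, T.parent w = some x then h.choose else T.root) else T.root
  parent := fun w =>
    if w = x then none
    else if T.parent w = some x then T.parent x
    else T.parent w

end RTree

/-- Reachability inside the vertex set `s`, i.e. in the induced subgraph `G[s]`. -/
def reachWithin (G : SimpleGraph V) (s : Set V) : V → V → Prop :=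
  Relation.ReflTransGen (fun a b => a ∈ s ∧ b ∈ s ∧ G.Adj a b)

/-- Recursive definition of a search tree: the children of the root are the roots of
search trees on the connected components of the graph minus the root. -/
inductive IsSearchTreeRec {V : Type u} (G : SimpleGraph V) : RTree V → Prop
  | intro (T : RTree V) (hwf : T.WF)
      (hconn : ∀ a ∈ T.supp, ∀ b ∈ T.supp, reachWithin G T.supp a b)
      (hcomp : ∀ c, T.parent c = some T.root →
        ∀ w, w ∈ T.descendants c ↔
          (w ∈ T.supp ∧ w ≠ T.root ∧ reachWithin G (T.supp \ {T.root}) c w))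
      (hrec : ∀ c, T.parent c = some T.root → IsSearchTreeRec G (T.subtreeAt c)) :
      IsSearchTreeRec G T

/-- `T` is a search tree on the induced subgraph `G[s]`. -/
def IsSearchTreeOn (G : SimpleGraph V) (s : Set V) (T : RTree V) : Prop :=
  T.supp = s ∧ IsSearchTreeRec G T

/-- `T` is a search tree on `G`. -/
def IsSearchTree (G : SimpleGraph V) (T : RTree V) : Prop :=
  IsSearchTreeOn G Set.univ T

/-- The `uv`-rotation of `T` (for `v` a child of `u`): `u` becomes a child of `v`, `v` takes
`u`'s old parent, and each subtree `S` of `v` is reattached below `u` iff `u` has a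
`G`-neighbour in `S`. -/
noncomputable def rotate (G : SimpleGraph V) (T : RTree V) (u v : V) : RTree V where
  supp := T.supp
  root := if T.root = u then v else T.root
  parent := fun w =>
    if w = v then T.parent u
    else if w = u then some v
    else if T.parent w = some v then
      (if ∃ z ∈ T.descendants w, G.Adj u z then some u else some v)
    else T.parent w

def IsRotation (G : SimpleGraph V) (S S' : RTree V) : Prop :=
  ∃ u v, S.parent v = some u ∧ S' = rotate G S u v

def rotAdj (G : SimpleGraph V) (S S' : RTree V) : Prop :=
  S ≠ S' ∧ (IsRotation G S S' ∨ IsRotation G S' S)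

/-- The rotation graph of the induced subgraph `G[s]`: vertices are the search trees on
`G[s]`, two trees being adjacent iff they differ by a single rotation. -/
def rotationGraphOn (G : SimpleGraph V) (s : Set V) :
    SimpleGraph {T : RTree V // IsSearchTreeOn G s T} where
  Adj T T' := rotAdj G T.1 T'.1
  symm := ⟨fun T T' h => ⟨Ne.symm h.1, Or.symm h.2⟩⟩
  loopless := ⟨fun T h => h.1 rfl⟩

/-- A vertex of `K` of maximal depth in `T` (the vertex `v_{λ(T)}`). -/
noncomputable def deepestIn (T : RTree V) (K : Set V) : V :=
  if h : ∃ u, u ∈ K ∧ ∀ w ∈ K, T.depthOf w ≤ T.depthOf u then h.choose else T.root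

/-- `u` and `v` have different relative order in `T` and `T'`. -/
def diffRelOrder (T T' : RTree V) (u v : V) : Prop :=
  (T.isAncestor u v ∧ ¬ T'.isAncestor u v) ∨ (¬ T.isAncestor u v ∧ T'.isAncestor u v)

/-- The step from `S` to `S'` is a rotation of the pair `u`, `v`. -/
def isUVStep (G : SimpleGraph V) (u v : V) (S S' : RTree V) : Prop :=
  (S.parent v = some u ∧ S' = rotate G S u v) ∨ (S.parent u = some v ∧ S' = rotate G S v u)

/-- A threshold graph: obtainable from the one-vertex graph by repeatedly adding either an
isolated vertex or a universal vertex. -/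
def IsThresholdGraph {V : Type u} [Fintype V] (G : SimpleGraph V) : Prop :=
  ∃ e : Fin (Fintype.card V) ≃ V,
    ∀ i : Fin (Fintype.card V),
      (∀ j, j < i → ¬ G.Adj (e i) (e j)) ∨ (∀ j, j < i → G.Adj (e i) (e j))

/-- The complete split graph `SPK_{p,q}`: a clique of size `p` completely joined to an
independent set of size `q`. -/
def completeSplitGraph (p q : ℕ) : SimpleGraph (Fin p ⊕ Fin q) where
  Adj a b := a ≠ b ∧ (a.isLeft = true ∨ b.isLeft = true)
  symm := ⟨fun a b h => ⟨Ne.symm h.1, Or.symm h.2⟩⟩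
  loopless := ⟨fun a h => h.1 rfl⟩

namespace RTree

variable {V : Type u} {T : RTree V}

lemma pIter_one (T : RTree V) (w : V) : T.pIter 1 w = T.parent w := by
  cases h : T.parent w <;> simp [pIter, h]

lemma pIter_add (T : RTree V) (m n : ℕ) (w : V) :
    T.pIter (m + n) w = (T.pIter m w).bind (T.pIter n) := by
  induction m generalizing w with
  | zero => simp [pIter]
  | succ m ih =>
    have : m + 1 + n = (m + n) + 1 := by omega
    rw [this]
    show (T.parent w).bind (T.pIter (m + n)) = ((T.parent w).bind (T.pIter m)).bind (T.pIter n)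
    cases h : T.parent w with
    | none => simp
    | some z => simp [ih z]

lemma isAncestor_iff_pIter (T : RTree V) (u w : V) :
    T.isAncestor u w ↔ ∃ n, T.pIter n w = some u := by
  constructor
  · intro h
    induction h with
    | refl => exact ⟨0, rfl⟩
    | tail h1 h2 ih =>
      obtain ⟨n, hn⟩ := ih
      refine ⟨n + 1, ?_⟩
      rw [pIter_add, hn]
      simpa [pIter_one] using (show T.parent _ = some _ from h2)
  · rintro ⟨n, hn⟩
    induction n generalizing w with
    | zero =>
      simp only [pIter, Option.some_inj] at hn
      exact hn ▸ Relation.ReflTransGen.refl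
    | succ n ih =>
      show Relation.ReflTransGen T.parentRel w u
      rcases h : T.parent w with _ | z
      · simp [pIter, h] at hn
      · have : T.pIter n z = some u := by simpa [pIter, h] using hn
        exact Relation.ReflTransGen.head h (ih z this)

lemma parent_eq_some (hwf : T.WF) {w u : V} (h : T.parent w = some u) :
    w ∈ T.supp ∧ w ≠ T.root ∧ u ∈ T.supp := by
  by_cases hw : w ∈ T.supp
  · by_cases hr : w = T.root
    · rw [hr, hwf.2.1] at h; exact absurd h (by simp)
    · obtain ⟨u', hu', hpu⟩ := hwf.2.2.2.1 w hw hr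
      rw [hpu] at h
      exact ⟨hw, hr, by injection h with h'; exact h' ▸ hu'⟩
  · rw [hwf.2.2.1 w hw] at h; exact absurd h (by simp)

lemma pIter_root (hwf : T.WF) (n : ℕ) : T.pIter (n + 1) T.root = none := by
  show (T.parent T.root).bind _ = none
  rw [hwf.2.1]; rfl

lemma anc_antisymm (hwf : T.WF) {u w : V} (hw : w ∈ T.supp)
    (h1 : T.isAncestor u w) (h2 : T.isAncestor w u) : u = w := by
  obtain ⟨m, hm⟩ := (isAncestor_iff_pIter T u w).1 h1
  obtain ⟨k, hk⟩ := (isAncestor_iff_pIter T w u).1 h2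
  obtain ⟨t, ht⟩ := (isAncestor_iff_pIter T T.root w).1 (hwf.2.2.2.2 w hw)
  have hmk : T.pIter (m + k) w = some w := by rw [pIter_add, hm]; exact hk
  rcases Nat.eq_zero_or_pos (m + k) with h0 | hpos
  · have : m = 0 := by omega
    rw [this] at hm; simpa [pIter] using hm.symm
  · exfalso
    have e1 : T.pIter (t + (m + k)) w = none := by
      rw [pIter_add, ht]
      obtain ⟨s, hs⟩ := Nat.exists_eq_add_of_lt hpos
      rw [show m + k = s + 1 by omega]
      exact pIter_root hwf s
    have e2 : T.pIter (t + (m + k)) w = some T.root := by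
      rw [Nat.add_comm, pIter_add, hmk]; exact ht
    rw [e1] at e2; exact absurd e2 (by simp)

lemma anc_mem (hwf : T.WF) {u w : V} (hw : w ∈ T.supp) (h : T.isAncestor u w) : u ∈ T.supp := by
  induction h with
  | refl => exact hw
  | tail h1 h2 ih => exact (parent_eq_some hwf h2).2.2

lemma anc_trans {u w z : V} (h1 : T.isAncestor u w) (h2 : T.isAncestor w z) :
    T.isAncestor u z := Relation.ReflTransGen.trans h2 h1

lemma anc_linear (hwf : T.WF) {z a v : V} (h1 : T.isAncestor z v) (h2 : T.isAncestor a v) :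
    T.isAncestor z a ∨ T.isAncestor a z := by
  obtain ⟨j, hj⟩ := (isAncestor_iff_pIter T z v).1 h1
  obtain ⟨k, hk⟩ := (isAncestor_iff_pIter T a v).1 h2
  rcases le_total j k with h | h
  · refine Or.inr ((isAncestor_iff_pIter T a z).2 ⟨k - j, ?_⟩)
    have : T.pIter (j + (k - j)) v = some a := by rw [show j + (k-j) = k by omega]; exact hk
    rw [pIter_add, hj] at this; exact this
  · refine Or.inl ((isAncestor_iff_pIter T z a).2 ⟨j - k, ?_⟩)
    have : T.pIter (k + (j - k)) v = some z := by rw [show k + (j-k) = j by omega]; exact hj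
    rw [pIter_add, hk] at this; exact this

end RTree
namespace RTree

variable {V : Type u} {T : RTree V}

lemma depth_spec (hwf : T.WF) {v : V} (hv : v ∈ T.supp) :
    T.pIter (T.depthOf v) v = some T.root := by
  have : ∃ n, T.pIter n v = some T.root :=
    (isAncestor_iff_pIter T T.root v).1 (hwf.2.2.2.2 v hv)
  exact Nat.sInf_mem this

lemma ancAt_spec (hwf : T.WF) {v : V} (hv : v ∈ T.supp) {i : ℕ} (hi : i ≤ T.depthOf v) :
    T.pIter (T.depthOf v - i) v = some (T.ancAt v i) ∧
    T.pIter i (T.ancAt v i) = some T.root := by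
  have hd := depth_spec hwf hv
  rw [show T.depthOf v = (T.depthOf v - i) + i by omega, pIter_add] at hd
  rcases h : T.pIter (T.depthOf v - i) v with _ | a
  · rw [h] at hd
    rw [Option.bind_none] at hd
    exact absurd hd (by simp)
  · rw [h] at hd
    simp only [Option.bind_some] at hd
    have : T.ancAt v i = a := by unfold ancAt; rw [h]; rfl
    rw [this]
    exact ⟨rfl, hd⟩

lemma ancAt_anc (hwf : T.WF) {v : V} (hv : v ∈ T.supp) {i : ℕ} (hi : i ≤ T.depthOf v) :
    T.isAncestor (T.ancAt v i) v :=
  (isAncestor_iff_pIter T _ v).2 ⟨_, (ancAt_spec hwf hv hi).1⟩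

lemma ancAt_mem (hwf : T.WF) {v : V} (hv : v ∈ T.supp) {i : ℕ} (hi : i ≤ T.depthOf v) :
    T.ancAt v i ∈ T.supp := anc_mem hwf hv (ancAt_anc hwf hv hi)

lemma parent_ancAt (hwf : T.WF) {v : V} (hv : v ∈ T.supp) {i : ℕ} (h1 : 1 ≤ i)
    (hi : i ≤ T.depthOf v) :
    T.parent (T.ancAt v i) = some (T.ancAt v (i - 1)) := by
  have hs1 := (ancAt_spec hwf hv hi).1
  have hs2 := (ancAt_spec hwf hv (show i - 1 ≤ T.depthOf v by omega)).1
  rw [show T.depthOf v - (i-1) = (T.depthOf v - i) + 1 by omega, pIter_add, hs1] at hs2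
  simpa [pIter_one] using hs2

lemma root_not_anc (hwf : T.WF) {c : V} (hc : T.parent c = some T.root) :
    ¬ T.isAncestor c T.root := by
  intro h
  obtain ⟨k, hk⟩ := (isAncestor_iff_pIter T c T.root).1 h
  rcases k with _ | k
  · simp only [pIter, Option.some_inj] at hk
    rw [← hk, hwf.2.1] at hc; exact absurd hc (by simp)
  · rw [pIter_root hwf] at hk; exact absurd hk (by simp)

lemma desc_root (hwf : T.WF) : T.descendants T.root = T.supp := by
  ext z
  exact ⟨fun h => h.1, fun h => ⟨h, hwf.2.2.2.2 z h⟩⟩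

lemma mem_desc_of_parent_mem (hwf : T.WF) {c z y : V} (hz : z ∈ T.descendants c)
    (hzc : z ≠ c) (hp : T.parent z = some y) : y ∈ T.descendants c := by
  obtain ⟨k, hk⟩ := (isAncestor_iff_pIter T c z).1 hz.2
  rcases k with _ | k
  · simp only [pIter, Option.some_inj] at hk; exact absurd hk hzc
  · have : T.pIter k y = some c := by
      rwa [show k + 1 = 1 + k by omega, pIter_add, pIter_one, hp] at hk
    exact ⟨(parent_eq_some hwf hp).2.2, (isAncestor_iff_pIter T c y).2 ⟨k, this⟩⟩

lemma subtree_parent_sub {c w u : V} (h : (T.subtreeAt c).parent w = some u) :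
    T.parent w = some u := by
  unfold subtreeAt at h
  dsimp at h
  split_ifs at h
  exact h

lemma subtree_anc_mono {c w z : V} (h : (T.subtreeAt c).isAncestor w z) :
    T.isAncestor w z :=
  Relation.ReflTransGen.mono (p := T.parentRel) (fun _ _ hp => subtree_parent_sub hp) _ _ h

lemma subtree_anc (hwf : T.WF) {c w z : V} (hwD : w ∈ T.descendants c)
    (hzD : z ∈ T.descendants c) (h : T.isAncestor w z) :
    (T.subtreeAt c).isAncestor w z := by
  unfold isAncestor at h ⊢
  revert hzD
  induction h using Relation.ReflTransGen.head_induction_on with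
  | refl => intro _; exact Relation.ReflTransGen.refl
  | @head p q h1 h2 ih =>
    intro hpD
    by_cases hpc : p = c
    · subst hpc
      have hwc : w = p := by
        refine anc_antisymm hwf hpD.1 ?_ hwD.2
        exact Relation.ReflTransGen.head h1 h2
      rw [hwc]
    · have hqD : q ∈ T.descendants c := mem_desc_of_parent_mem hwf hpD hpc h1
      refine Relation.ReflTransGen.head ?_ (ih hqD)
      show (if p = c then none else if p ∈ T.descendants c then T.parent p else none) = some q
      rw [if_neg hpc, if_pos hpD]; exact h1

lemma subtree_desc (hwf : T.WF) {c w : V} (hw : w ∈ T.descendants c) :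
    (T.subtreeAt c).descendants w = T.descendants w := by
  ext z
  constructor
  · rintro ⟨hz, hanc⟩
    exact ⟨hz.1, subtree_anc_mono hanc⟩
  · rintro ⟨hz, hanc⟩
    have hzD : z ∈ T.descendants c := ⟨hz, anc_trans hw.2 hanc⟩
    exact ⟨hzD, subtree_anc hwf hw hzD hanc⟩

lemma subtree_wf (hwf : T.WF) {c : V} (hc : c ∈ T.supp) : (T.subtreeAt c).WF := by
  refine ⟨⟨hc, Relation.ReflTransGen.refl⟩, ?_, ?_, ?_, ?_⟩
  · show (if c = c then none else _) = none
    rw [if_pos rfl]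
  · intro z hz
    replace hz : z ∉ T.descendants c := hz
    show (if z = c then none else if z ∈ T.descendants c then T.parent z else none) = none
    by_cases h1 : z = c
    · rw [if_pos h1]
    · rw [if_neg h1, if_neg hz]
  · intro z hz hzc
    replace hz : z ∈ T.descendants c := hz
    replace hzc : z ≠ c := hzc
    have hzs : z ∈ T.supp := hz.1
    have hzr : z ≠ T.root := by
      intro hzr
      obtain ⟨k, hk⟩ := (isAncestor_iff_pIter T c z).1 hz.2
      rcases k with _ | k
      · simp only [pIter, Option.some_inj] at hk; exact hzc hk
      · rw [hzr, pIter_root hwf] at hk; exact absurd hk (by simp)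
    obtain ⟨u, hu, hpu⟩ := hwf.2.2.2.1 z hzs hzr
    refine ⟨u, mem_desc_of_parent_mem hwf hz hzc hpu, ?_⟩
    show (if z = c then none else if z ∈ T.descendants c then T.parent z else none) = some u
    rw [if_neg hzc, if_pos hz]; exact hpu
  · intro z hz
    replace hz : z ∈ T.descendants c := hz
    exact subtree_anc hwf ⟨hc, Relation.ReflTransGen.refl⟩ hz hz.2

lemma exists_child (hwf : T.WF) {w : V} (hw : w ∈ T.supp) (hwr : w ≠ T.root) :
    ∃ c, T.parent c = some T.root ∧ w ∈ T.descendants c := by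
  obtain ⟨n, hn⟩ := (isAncestor_iff_pIter T T.root w).1 (hwf.2.2.2.2 w hw)
  rcases n with _ | n
  · simp only [pIter, Option.some_inj] at hn; exact absurd hn hwr
  · rw [pIter_add] at hn
    rcases h : T.pIter n w with _ | c
    · rw [h] at hn
      rw [Option.bind_none] at hn
      exact absurd hn (by simp)
    · rw [h] at hn
      simp only [Option.bind_some, pIter_one] at hn
      exact ⟨c, hn, hw, (isAncestor_iff_pIter T c w).2 ⟨n, h⟩⟩

end RTree

/-- Characterization of search trees. -/
def GoodTree {V : Type u} (G : SimpleGraph V) (T : RTree V) : Prop :=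
  T.WF ∧
  (∀ w ∈ T.supp, ∀ a ∈ T.descendants w, ∀ b ∈ T.descendants w,
    reachWithin G (T.descendants w) a b) ∧
  (∀ a ∈ T.supp, ∀ b ∈ T.supp, G.Adj a b → T.isAncestor a b ∨ T.isAncestor b a)

lemma reachWithin_mono {V : Type u} {G : SimpleGraph V} {s t : Set V} (hst : s ⊆ t) {p q : V}
    (h : reachWithin G s p q) : reachWithin G t p q :=
  Relation.ReflTransGen.mono (p := fun a b => a ∈ t ∧ b ∈ t ∧ G.Adj a b) (fun _ _ h => ⟨hst h.1, hst h.2.1, h.2.2⟩) _ _ h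

lemma reachWithin_symm {V : Type u} {G : SimpleGraph V} {s : Set V} {p q : V}
    (h : reachWithin G s p q) : reachWithin G s q p := by
  induction h with
  | refl => exact Relation.ReflTransGen.refl
  | tail h1 h2 ih =>
    exact Relation.ReflTransGen.trans (Relation.ReflTransGen.single ⟨h2.2.1, h2.1, h2.2.2.symm⟩) ih

lemma reachWithin_insert {V : Type u} {G : SimpleGraph V} {s : Set V} {x v : V}
    (hbase : ∀ p ∈ s, ∀ q ∈ s, reachWithin G s p q) (hv : v ∈ s) (hadj : G.Adj x v) :
    ∀ p ∈ insert x s, ∀ q ∈ insert x s, reachWithin G (insert x s) p q := by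
  have hstep : reachWithin G (insert x s) x v :=
    Relation.ReflTransGen.single ⟨Set.mem_insert x s, Set.mem_insert_of_mem x hv, hadj⟩
  have hmono : ∀ p ∈ s, ∀ q ∈ s, reachWithin G (insert x s) p q := fun p hp q hq =>
    reachWithin_mono (Set.subset_insert x s) (hbase p hp q hq)
  intro p hp q hq
  rcases hp with rfl | hp
  · rcases hq with rfl | hq
    · exact Relation.ReflTransGen.refl
    · exact Relation.ReflTransGen.trans hstep (hmono v hv q hq)
  · rcases hq with rfl | hq
    · exact reachWithin_symm (Relation.ReflTransGen.trans hstep (hmono v hv p hp))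
    · exact hmono p hp q hq
lemma isSearchTreeRec_good {V : Type u} {G : SimpleGraph V} {T : RTree V}
    (h : IsSearchTreeRec G T) : GoodTree G T := by
  induction h with
  | intro T hwf hconn hcomp hrec ih =>
    refine ⟨hwf, ?_, ?_⟩
    · intro w hw
      by_cases hwr : w = T.root
      · subst hwr
        rw [RTree.desc_root hwf]
        exact hconn
      · obtain ⟨c, hc, hwD⟩ := RTree.exists_child hwf hw hwr
        have hg := ih c hc
        rw [← RTree.subtree_desc hwf hwD]
        exact hg.2.1 w hwD
    · intro p hp q hq hadj
      by_cases hpr : p = T.root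
      · exact Or.inl (hpr ▸ hwf.2.2.2.2 q hq)
      · by_cases hqr : q = T.root
        · exact Or.inr (hqr ▸ hwf.2.2.2.2 p hp)
        · obtain ⟨c, hc, hpD⟩ := RTree.exists_child hwf hp hpr
          have hreach : reachWithin G (T.supp \ {T.root}) c q := by
            have h1 := ((hcomp c hc p).1 hpD).2.2
            exact Relation.ReflTransGen.tail h1 ⟨⟨hp, hpr⟩, ⟨hq, hqr⟩, hadj⟩
          have hqD : q ∈ T.descendants c := (hcomp c hc q).2 ⟨hq, hqr, hreach⟩
          rcases (ih c hc).2.2 p hpD q hqD hadj with h | h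
          · exact Or.inl (RTree.subtree_anc_mono h)
          · exact Or.inr (RTree.subtree_anc_mono h)

lemma desc_subset_aux {V : Type u} {T : RTree V} (hwf : T.WF) {c : V}
    (hc : T.parent c = some T.root) : T.descendants c ⊆ T.supp \ {T.root} := by
  rintro z ⟨hz, hanc⟩
  refine ⟨hz, ?_⟩
  intro hzr
  simp only [Set.mem_singleton_iff] at hzr
  exact RTree.root_not_anc hwf hc (hzr ▸ hanc)

lemma anc_of_mem_desc {V : Type u} {T : RTree V} (hwf : T.WF) {c b w : V}
    (hc : T.parent c = some T.root) (hb : b ∈ T.descendants c)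
    (h : T.isAncestor w b) (hw : w ≠ T.root) : w ∈ T.descendants c := by
  obtain ⟨j, hj⟩ := (T.isAncestor_iff_pIter w b).1 h
  obtain ⟨m, hm⟩ := (T.isAncestor_iff_pIter c b).1 hb.2
  rcases le_total j m with hle | hle
  · have : T.pIter (m - j) w = some c := by
      have := hm
      rw [show m = j + (m - j) by omega, RTree.pIter_add, hj] at this
      simpa using this
    exact ⟨RTree.anc_mem hwf hb.1 h, (T.isAncestor_iff_pIter c w).2 ⟨m - j, this⟩⟩
  · have hcw : T.pIter (j - m) c = some w := by
      have := hj
      rw [show j = m + (j - m) by omega, RTree.pIter_add, hm] at this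
      simpa using this
    rcases h' : j - m with _ | k
    · rw [h'] at hcw
      simp only [RTree.pIter, Option.some_inj] at hcw
      rw [← hcw]
      exact ⟨(RTree.parent_eq_some hwf hc).1, Relation.ReflTransGen.refl⟩
    · exfalso
      rw [h'] at hcw
      rw [show k + 1 = 1 + k by omega, RTree.pIter_add, RTree.pIter_one, hc] at hcw
      rcases k with _ | k
      · simp only [RTree.pIter, Option.bind_some, Option.some_inj] at hcw
        exact hw hcw.symm
      · simp only [Option.bind_some] at hcw
        rw [RTree.pIter_root hwf k] at hcw
        exact absurd hcw (by simp)

lemma good_isSearchTreeRec {V : Type u} [Finite V] {G : SimpleGraph V} :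
    ∀ n (T : RTree V), T.supp.ncard ≤ n → GoodTree G T → IsSearchTreeRec G T := by
  intro n
  induction n with
  | zero =>
    intro T hcard hg
    exfalso
    have : 0 < T.supp.ncard := (Set.ncard_pos (Set.toFinite _)).2 ⟨T.root, hg.1.1⟩
    omega
  | succ n ih =>
    intro T hcard hg
    obtain ⟨hwf, hconnD, hcompat⟩ := hg
    refine IsSearchTreeRec.intro T hwf ?_ ?_ ?_
    · intro a ha b hb
      have := hconnD T.root hwf.1 a (by rw [RTree.desc_root hwf]; exact ha)
        b (by rw [RTree.desc_root hwf]; exact hb)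
      rwa [RTree.desc_root hwf] at this
    · intro c hc w
      constructor
      · intro hwD
        have hcs : c ∈ T.supp := (RTree.parent_eq_some hwf hc).1
        refine ⟨hwD.1, ?_, ?_⟩
        · intro hwr
          exact RTree.root_not_anc hwf hc (hwr ▸ hwD.2)
        · exact reachWithin_mono (desc_subset_aux hwf hc)
            (hconnD c hcs c ⟨hcs, Relation.ReflTransGen.refl⟩ w hwD)
      · rintro ⟨hws, hwr, hreach⟩
        have hcs : c ∈ T.supp := (RTree.parent_eq_some hwf hc).1
        clear hws hwr
        induction hreach with
        | refl => exact ⟨hcs, Relation.ReflTransGen.refl⟩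
        | @tail b w' h1 h2 ih2 =>
          have hbD := ih2
          rcases hcompat b h2.1.1 w' h2.2.1.1 h2.2.2 with h | h
          · exact ⟨h2.2.1.1, RTree.anc_trans hbD.2 h⟩
          · exact anc_of_mem_desc hwf hc hbD h h2.2.1.2
    · intro c hc
      have hcs : c ∈ T.supp := (RTree.parent_eq_some hwf hc).1
      have hlt : (T.subtreeAt c).supp.ncard < T.supp.ncard := by
        refine Set.ncard_lt_ncard ?_ (Set.toFinite _)
        show T.descendants c ⊂ T.supp
        rw [Set.ssubset_iff_of_subset (fun z hz => (desc_subset_aux hwf hc hz).1)]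
        exact ⟨T.root, hwf.1, fun h => RTree.root_not_anc hwf hc h.2⟩
      refine ih (T.subtreeAt c) (by omega) ⟨RTree.subtree_wf hwf hcs, ?_, ?_⟩
      · intro w hw
        replace hw : w ∈ T.descendants c := hw
        intro p hp q hq
        rw [RTree.subtree_desc hwf hw] at hp hq ⊢
        exact hconnD w hw.1 p hp q hq
      · intro p hp q hq hadj
        replace hp : p ∈ T.descendants c := hp
        replace hq : q ∈ T.descendants c := hq
        rcases hcompat p hp.1 q hq.1 hadj with h | h
        · exact Or.inl (RTree.subtree_anc hwf hp hq h)
        · exact Or.inr (RTree.subtree_anc hwf hq hp h)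
namespace RTree

variable {V : Type u}

/-- Insert `x` between `a` and its parent `b`. -/
noncomputable def splice (T : RTree V) (x a b : V) : RTree V where
  supp := insert x T.supp
  root := T.root
  parent := fun w => if w = x then some b else if w = a then some x else T.parent w

/-- Insert `x` as a new root above `T`. -/
noncomputable def spliceRoot (T : RTree V) (x : V) : RTree V where
  supp := insert x T.supp
  root := x
  parent := fun w => if w = x then none else if w = T.root then some x else T.parent w

variable {T : RTree V} {x a b : V}

lemma splice_parent (w : V) : (T.splice x a b).parent w =
    if w = x then some b else if w = a then some x else T.parent w := rfl

section Splice

variable (hwf : T.WF) (hx : x ∉ T.supp) (hab : T.parent a = some b)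

include hwf hx hab

lemma splice_ax : a ≠ x := fun h => hx (h ▸ (parent_eq_some hwf hab).1)

lemma splice_bx : b ≠ x := fun h => hx (h ▸ (parent_eq_some hwf hab).2.2)

lemma splice_anc_of {u w : V} (h : T.isAncestor u w) : (T.splice x a b).isAncestor u w := by
  induction h with
  | refl => exact Relation.ReflTransGen.refl
  | @tail m u' h1 h2 ih =>
    have h2' : T.parent m = some u' := h2
    have hmx : m ≠ x := fun h => by
      rw [h, hwf.2.2.1 x hx] at h2'; exact absurd h2' (by simp)
    by_cases hma : m = a
    · have hub : u' = b := by
        rw [hma, hab] at h2'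
        exact (Option.some_inj.mp h2').symm
      have s1 : (T.splice x a b).parentRel m x := by
        show (T.splice x a b).parent m = some x
        rw [splice_parent, if_neg hmx, if_pos hma]
      have s2 : (T.splice x a b).parentRel x u' := by
        show (T.splice x a b).parent x = some u'
        rw [splice_parent, if_pos rfl, hub]
      exact Relation.ReflTransGen.tail (Relation.ReflTransGen.tail ih s1) s2
    · refine Relation.ReflTransGen.tail ih ?_
      show (T.splice x a b).parent m = some u'
      rw [splice_parent, if_neg hmx, if_neg hma]; exact h2'

lemma splice_anc_from {u w : V} (h : (T.splice x a b).isAncestor u w) (hu : u ≠ x) :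
    if w = x then T.isAncestor u b else T.isAncestor u w := by
  unfold isAncestor at h
  induction h using Relation.ReflTransGen.head_induction_on with
  | refl => rw [if_neg hu]; exact Relation.ReflTransGen.refl
  | @head p q h1 h2 ih =>
    have h1' : (if p = x then some b else if p = a then some x else T.parent p) = some q := h1
    by_cases hpx : p = x
    · rw [if_pos hpx] at h1'
      have : q = b := (Option.some_inj.mp h1').symm
      subst this
      rw [if_pos hpx]
      rwa [if_neg (splice_bx hwf hx hab)] at ih
    · rw [if_neg hpx] at h1'
      rw [if_neg hpx]
      by_cases hpa : p = a
      · rw [if_pos hpa] at h1'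
        have : q = x := (Option.some_inj.mp h1').symm
        subst this
        rw [if_pos rfl] at ih
        rw [hpa]
        exact Relation.ReflTransGen.head hab ih
      · rw [if_neg hpa] at h1'
        have hqx : q ≠ x := fun h => hx (h ▸ (parent_eq_some hwf h1').2.2)
        rw [if_neg hqx] at ih
        exact Relation.ReflTransGen.head h1' ih

lemma splice_not_anc_ab : ¬ T.isAncestor a b := by
  intro h
  have := anc_antisymm hwf (parent_eq_some hwf hab).2.2 h (Relation.ReflTransGen.single hab)
  subst this
  have h2 : T.isAncestor T.root a := hwf.2.2.2.2 a (parent_eq_some hwf hab).1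
  obtain ⟨t, ht⟩ := (T.isAncestor_iff_pIter T.root a).1 h2
  have hloop : ∀ n, T.pIter n a = some a := by
    intro n
    induction n with
    | zero => rfl
    | succ n ihn =>
      rw [show n + 1 = 1 + n by omega, pIter_add, pIter_one, hab]
      exact ihn
  rw [hloop t] at ht
  have : T.root = a := (Option.some_inj.mp ht).symm
  rw [← this] at hab
  rw [hwf.2.1] at hab
  exact absurd hab (by simp)

lemma splice_anc_of_parent' {z : V} (h : T.isAncestor z a) : z = a ∨ T.isAncestor z b := by
  obtain ⟨k, hk⟩ := (T.isAncestor_iff_pIter z a).1 h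
  rcases k with _ | k
  · simp only [pIter, Option.some_inj] at hk
    exact Or.inl hk.symm
  · rw [show k + 1 = 1 + k by omega, pIter_add, pIter_one, hab] at hk
    simp only [Option.bind_some] at hk
    exact Or.inr ((T.isAncestor_iff_pIter z b).2 ⟨k, hk⟩)

lemma splice_anc_x_iff {z : V} : (T.splice x a b).isAncestor x z ↔ z = x ∨ T.isAncestor a z := by
  constructor
  · intro h
    rcases Relation.ReflTransGen.cases_tail h with h' | ⟨m, hm1, hm2⟩
    · exact Or.inl h'.symm
    · have hm2' : (if m = x then some b else if m = a then some x else T.parent m) = some x := hm2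
      have hma : m = a := by
        by_cases h1 : m = x
        · rw [if_pos h1] at hm2'
          exact absurd (by injection hm2') (splice_bx hwf hx hab)
        · by_cases h2 : m = a
          · exact h2
          · rw [if_neg h1, if_neg h2] at hm2'
            exact absurd ((parent_eq_some hwf hm2').2.2) hx
      subst hma
      by_cases hzx : z = x
      · exact Or.inl hzx
      · have := splice_anc_from hwf hx hab hm1 (splice_ax hwf hx hab)
        rw [if_neg hzx] at this
        exact Or.inr this
  · rintro (rfl | h)
    · exact Relation.ReflTransGen.refl
    · refine Relation.ReflTransGen.tail (splice_anc_of hwf hx hab h) ?_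
      show (T.splice x a b).parent a = some x
      rw [splice_parent, if_neg (splice_ax hwf hx hab), if_pos rfl]

lemma splice_anc_to_x_iff {w : V} (hw : w ≠ x) :
    (T.splice x a b).isAncestor w x ↔ T.isAncestor w b := by
  constructor
  · intro h
    rcases Relation.ReflTransGen.cases_head h with h' | ⟨m, hm1, hm2⟩
    · exact absurd h'.symm hw
    · have hm1' : (if x = x then some b else _) = some m := hm1
      rw [if_pos rfl] at hm1'
      have : m = b := (Option.some_inj.mp hm1').symm
      subst this
      have := splice_anc_from hwf hx hab hm2 hw
      rwa [if_neg (splice_bx hwf hx hab)] at this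
  · intro h
    refine Relation.ReflTransGen.head ?_ (splice_anc_of hwf hx hab h)
    show (T.splice x a b).parent x = some b
    rw [splice_parent, if_pos rfl]

lemma splice_desc_x : (T.splice x a b).descendants x = insert x (T.descendants a) := by
  ext z
  constructor
  · rintro ⟨hz, hanc⟩
    rcases (splice_anc_x_iff hwf hx hab).1 hanc with h | h
    · exact Or.inl h
    · rcases hz with rfl | hz
      · exact Or.inl rfl
      · exact Or.inr ⟨hz, h⟩
  · rintro (rfl | ⟨hz, hanc⟩)
    · exact ⟨Set.mem_insert _ _, Relation.ReflTransGen.refl⟩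
    · exact ⟨Set.mem_insert_of_mem _ hz, (splice_anc_x_iff hwf hx hab).2 (Or.inr hanc)⟩

lemma splice_desc_of_anc (w : V) (hw : w ≠ x) (hanc : (T.splice x a b).isAncestor w x) :
    (T.splice x a b).descendants w = insert x (T.descendants w) := by
  ext z
  constructor
  · rintro ⟨hz, hzanc⟩
    by_cases hzx : z = x
    · exact Or.inl hzx
    · have := splice_anc_from hwf hx hab hzanc hw
      rw [if_neg hzx] at this
      rcases hz with rfl | hz
      · exact absurd rfl hzx
      · exact Or.inr ⟨hz, this⟩
  · rintro (rfl | ⟨hz, hzanc⟩)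
    · exact ⟨Set.mem_insert _ _, hanc⟩
    · exact ⟨Set.mem_insert_of_mem _ hz, splice_anc_of hwf hx hab hzanc⟩

lemma splice_desc_of_not_anc (w : V) (hw : w ≠ x) (hanc : ¬ (T.splice x a b).isAncestor w x) :
    (T.splice x a b).descendants w = T.descendants w := by
  ext z
  constructor
  · rintro ⟨hz, hzanc⟩
    by_cases hzx : z = x
    · exact absurd (hzx ▸ hzanc) hanc
    · have := splice_anc_from hwf hx hab hzanc hw
      rw [if_neg hzx] at this
      rcases hz with rfl | hz
      · exact absurd rfl hzx
      · exact ⟨hz, this⟩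
  · rintro ⟨hz, hzanc⟩
    exact ⟨Set.mem_insert_of_mem _ hz, splice_anc_of hwf hx hab hzanc⟩

lemma splice_wf : (T.splice x a b).WF := by
  have hax := splice_ax hwf hx hab
  have hrx : T.root ≠ x := fun h => hx (h ▸ hwf.1)
  have har : a ≠ T.root := (parent_eq_some hwf hab).2.1
  refine ⟨Set.mem_insert_of_mem _ hwf.1, ?_, ?_, ?_, ?_⟩
  · show (if T.root = x then some b else if T.root = a then some x else T.parent T.root) = none
    rw [if_neg hrx, if_neg (fun h => har h.symm)]
    exact hwf.2.1
  · intro z hz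
    have hzx : z ≠ x := fun h => hz (h ▸ Set.mem_insert _ _)
    have hzs : z ∉ T.supp := fun h => hz (Set.mem_insert_of_mem _ h)
    show (if z = x then some b else if z = a then some x else T.parent z) = none
    rw [if_neg hzx, if_neg (fun h => hzs (by rw [h]; exact (parent_eq_some hwf hab).1))]
    exact hwf.2.2.1 z hzs
  · intro z hz hzr
    by_cases hzx : z = x
    · refine ⟨b, Set.mem_insert_of_mem _ (parent_eq_some hwf hab).2.2, ?_⟩
      show (if z = x then some b else _) = some b
      rw [if_pos hzx]
    · have hzs : z ∈ T.supp := by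
        rcases hz with h | h
        · exact absurd h hzx
        · exact h
      by_cases hza : z = a
      · refine ⟨x, Set.mem_insert _ _, ?_⟩
        show (if z = x then some b else if z = a then some x else T.parent z) = some x
        rw [if_neg hzx, if_pos hza]
      · obtain ⟨u, hu, hpu⟩ := hwf.2.2.2.1 z hzs hzr
        refine ⟨u, Set.mem_insert_of_mem _ hu, ?_⟩
        show (if z = x then some b else if z = a then some x else T.parent z) = some u
        rw [if_neg hzx, if_neg hza]
        exact hpu
  · intro z hz
    by_cases hzx : z = x
    · subst hzx
      have hb : T.isAncestor T.root b := hwf.2.2.2.2 b (parent_eq_some hwf hab).2.2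
      exact (splice_anc_to_x_iff hwf hx hab hrx).2 hb
    · have hzs : z ∈ T.supp := by
        rcases hz with h | h
        · exact absurd h hzx
        · exact h
      exact splice_anc_of hwf hx hab (hwf.2.2.2.2 z hzs)

lemma splice_good {G : SimpleGraph V} {v : V} (hGood : GoodTree G T) (hv : v ∈ T.supp)
    (hadj : G.Adj x v) (hNxz : ∀ z, G.Adj x z → z = v ∨ G.Adj v z)
    (hav : T.isAncestor a v) : GoodTree G (T.splice x a b) := by
  have hax := splice_ax hwf hx hab
  have hbv : T.isAncestor b v := Relation.ReflTransGen.tail hav hab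
  have hancxv : (T.splice x a b).isAncestor x v :=
    (splice_anc_x_iff hwf hx hab).2 (Or.inr hav)
  refine ⟨splice_wf hwf hx hab, ?_, ?_⟩
  · intro w hw
    by_cases hwx : w = x
    · subst hwx
      rw [splice_desc_x hwf hx hab]
      exact reachWithin_insert (hGood.2.1 a (parent_eq_some hwf hab).1)
        ⟨hv, hav⟩ hadj
    · have hws : w ∈ T.supp := by
        rcases hw with h | h
        · exact absurd h hwx
        · exact h
      by_cases hancwx : (T.splice x a b).isAncestor w x
      · rw [splice_desc_of_anc hwf hx hab w hwx hancwx]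
        have hwb : T.isAncestor w b := (splice_anc_to_x_iff hwf hx hab hwx).1 hancwx
        have hwv : T.isAncestor w v := anc_trans hwb hbv
        exact reachWithin_insert (hGood.2.1 w hws) ⟨hv, hwv⟩ hadj
      · rw [splice_desc_of_not_anc hwf hx hab w hwx hancwx]
        exact hGood.2.1 w hws
  · have hcompx : ∀ z ∈ T.supp, G.Adj x z →
        (T.splice x a b).isAncestor x z ∨ (T.splice x a b).isAncestor z x := by
      intro z hz hzadj
      rcases hNxz z hzadj with rfl | hvz
      · exact Or.inl hancxv
      · rcases hGood.2.2 v hv z hz hvz with h | h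
        · refine Or.inl (anc_trans hancxv (splice_anc_of hwf hx hab h))
        · have hzx : z ≠ x := fun hh => hx (hh ▸ hz)
          rcases anc_linear hwf h hav with h2 | h2
          · rcases splice_anc_of_parent' hwf hx hab h2 with h3 | h3
            · exact Or.inl ((splice_anc_x_iff hwf hx hab).2 (Or.inr (h3 ▸ Relation.ReflTransGen.refl)))
            · exact Or.inr ((splice_anc_to_x_iff hwf hx hab hzx).2 h3)
          · exact Or.inl ((splice_anc_x_iff hwf hx hab).2 (Or.inr h2))
    intro p hp q hq hadjpq
    by_cases hpx : p = x
    · have hqx : q ≠ x := by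
        intro h
        rw [hpx, h] at hadjpq
        exact hadjpq.ne rfl
      have hqs : q ∈ T.supp := by
        rcases hq with h | h
        · exact absurd h hqx
        · exact h
      rw [hpx]
      exact hcompx q hqs (by rwa [hpx] at hadjpq)
    · by_cases hqx : q = x
      · have hps : p ∈ T.supp := by
          rcases hp with h | h
          · exact absurd h hpx
          · exact h
        have := hcompx p hps (by rw [hqx] at hadjpq; exact hadjpq.symm)
        rw [hqx]
        exact this.symm
      · have hps : p ∈ T.supp := by
          rcases hp with h | h
          · exact absurd h hpx
          · exact h
        have hqs : q ∈ T.supp := by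
          rcases hq with h | h
          · exact absurd h hqx
          · exact h
        rcases hGood.2.2 p hps q hqs hadjpq with h | h
        · exact Or.inl (splice_anc_of hwf hx hab h)
        · exact Or.inr (splice_anc_of hwf hx hab h)

end Splice

end RTree
namespace RTree

variable {V : Type u} {T : RTree V} {x : V}

section SpliceRoot

variable (hwf : T.WF) (hx : x ∉ T.supp)

include hwf hx

lemma sr_rx : T.root ≠ x := fun h => hx (h ▸ hwf.1)

lemma sr_anc_of {u w : V} (h : T.isAncestor u w) : (T.spliceRoot x).isAncestor u w := by
  induction h with
  | refl => exact Relation.ReflTransGen.refl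
  | @tail m u' h1 h2 ih =>
    have h2' : T.parent m = some u' := h2
    have hmx : m ≠ x := fun h => by
      rw [h, hwf.2.2.1 x hx] at h2'; exact absurd h2' (by simp)
    have hmr : m ≠ T.root := (parent_eq_some hwf h2').2.1
    refine Relation.ReflTransGen.tail ih ?_
    show (if m = x then none else if m = T.root then some x else T.parent m) = some u'
    rw [if_neg hmx, if_neg hmr]
    exact h2'

lemma sr_anc_from_x {u : V} (h : (T.spliceRoot x).isAncestor u x) : u = x := by
  rcases Relation.ReflTransGen.cases_head h with h' | ⟨m, hm1, hm2⟩
  · exact h'.symm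
  · have hm1' : (if x = x then none else if x = T.root then some x else T.parent x) = some m := hm1
    rw [if_pos rfl] at hm1'
    exact absurd hm1' (by simp)

lemma sr_anc_from {u w : V} (h : (T.spliceRoot x).isAncestor u w) (hu : u ≠ x) :
    T.isAncestor u w := by
  unfold isAncestor at h
  induction h using Relation.ReflTransGen.head_induction_on with
  | refl => exact Relation.ReflTransGen.refl
  | @head p q h1 h2 ih =>
    have h1' : (if p = x then none else if p = T.root then some x else T.parent p) = some q := h1
    by_cases hpx : p = x
    · rw [if_pos hpx] at h1'
      exact absurd h1' (by simp)
    · rw [if_neg hpx] at h1'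
      by_cases hpr : p = T.root
      · rw [if_pos hpr] at h1'
        have hqx : q = x := (Option.some_inj.mp h1').symm
        exfalso
        exact hu (sr_anc_from_x hwf hx (hqx ▸ h2))
      · rw [if_neg hpr] at h1'
        exact Relation.ReflTransGen.head h1' ih

lemma sr_wf : (T.spliceRoot x).WF := by
  have hrx := sr_rx hwf hx
  refine ⟨Set.mem_insert _ _, ?_, ?_, ?_, ?_⟩
  · show (if x = x then none else _) = none
    rw [if_pos rfl]
  · intro z hz
    have hzx : z ≠ x := fun h => hz (h ▸ Set.mem_insert _ _)
    have hzs : z ∉ T.supp := fun h => hz (Set.mem_insert_of_mem _ h)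
    show (if z = x then none else if z = T.root then some x else T.parent z) = none
    rw [if_neg hzx, if_neg (fun h => hzs (by rw [h]; exact hwf.1))]
    exact hwf.2.2.1 z hzs
  · intro z hz hzx
    have hzx' : z ≠ x := hzx
    have hzs : z ∈ T.supp := by
      rcases hz with h | h
      · exact absurd h hzx'
      · exact h
    by_cases hzr : z = T.root
    · refine ⟨x, Set.mem_insert _ _, ?_⟩
      show (if z = x then none else if z = T.root then some x else T.parent z) = some x
      rw [if_neg hzx', if_pos hzr]
    · obtain ⟨u, hu, hpu⟩ := hwf.2.2.2.1 z hzs hzr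
      refine ⟨u, Set.mem_insert_of_mem _ hu, ?_⟩
      show (if z = x then none else if z = T.root then some x else T.parent z) = some u
      rw [if_neg hzx', if_neg hzr]
      exact hpu
  · intro z hz
    by_cases hzx : z = x
    · rw [hzx]
      exact Relation.ReflTransGen.refl
    · have hzs : z ∈ T.supp := by
        rcases hz with h | h
        · exact absurd h hzx
        · exact h
      refine Relation.ReflTransGen.tail (sr_anc_of hwf hx (hwf.2.2.2.2 z hzs)) ?_
      show (if T.root = x then none else if T.root = T.root then some x else _) = some x
      rw [if_neg hrx, if_pos rfl]

lemma sr_desc_x : (T.spliceRoot x).descendants x = insert x T.supp := by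
  ext z
  constructor
  · rintro ⟨hz, _⟩; exact hz
  · intro hz
    exact ⟨hz, (sr_wf hwf hx).2.2.2.2 z hz⟩

lemma sr_desc {w : V} (hw : w ≠ x) : (T.spliceRoot x).descendants w = T.descendants w := by
  ext z
  constructor
  · rintro ⟨hz, hanc⟩
    have hzx : z ≠ x := by
      rintro rfl
      exact hw (sr_anc_from_x hwf hx hanc)
    have hzs : z ∈ T.supp := by
      rcases hz with h | h
      · exact absurd h hzx
      · exact h
    exact ⟨hzs, sr_anc_from hwf hx hanc hw⟩
  · rintro ⟨hz, hanc⟩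
    exact ⟨Set.mem_insert_of_mem _ hz, sr_anc_of hwf hx hanc⟩

lemma sr_good {G : SimpleGraph V} {v : V} (hGood : GoodTree G T) (hv : v ∈ T.supp)
    (hadj : G.Adj x v) : GoodTree G (T.spliceRoot x) := by
  refine ⟨sr_wf hwf hx, ?_, ?_⟩
  · intro w hw
    by_cases hwx : w = x
    · rw [hwx, sr_desc_x hwf hx]
      refine reachWithin_insert ?_ hv hadj
      have := hGood.2.1 T.root hwf.1
      rwa [desc_root hwf] at this
    · rw [sr_desc hwf hx hwx]
      have hws : w ∈ T.supp := by
        rcases hw with h | h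
        · exact absurd h hwx
        · exact h
      exact hGood.2.1 w hws
  · intro p hp q hq hadjpq
    by_cases hpx : p = x
    · refine Or.inl ?_
      rw [hpx]
      exact (sr_wf hwf hx).2.2.2.2 q hq
    · by_cases hqx : q = x
      · refine Or.inr ?_
        rw [hqx]
        exact (sr_wf hwf hx).2.2.2.2 p hp
      · have hps : p ∈ T.supp := by
          rcases hp with h | h
          · exact absurd h hpx
          · exact h
        have hqs : q ∈ T.supp := by
          rcases hq with h | h
          · exact absurd h hqx
          · exact h
        rcases hGood.2.2 p hps q hqs hadjpq with h | h
        · exact Or.inl (sr_anc_of hwf hx h)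
        · exact Or.inr (sr_anc_of hwf hx h)

end SpliceRoot

end RTree

/-- if `N[x] ⊆ N[v]` and `T` is a search tree on `G' − x`, then for every
`0 ≤ i ≤ d_{T,v}` the insertion `T(i,x,v)` is a search tree on `G'`. -/
theorem insertAt_isSearchTree {V : Type u} [Fintype V] (G' : SimpleGraph V)
    (hG' : G'.Connected) (x v : V) (hxv : x ≠ v)
    (hN : ∀ z : V, (z = x ∨ G'.Adj x z) → (z = v ∨ G'.Adj v z))
    (T : RTree V) (hT : IsSearchTreeOn G' {x}ᶜ T) (i : ℕ) (hi : i ≤ T.depthOf v) :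
    IsSearchTree G' (T.insertAt i x v) := by
  obtain ⟨hsupp, hrec⟩ := hT
  have hGood : GoodTree G' T := isSearchTreeRec_good hrec
  have hwf : T.WF := hGood.1
  have hxs : x ∉ T.supp := by rw [hsupp]; simp
  have hv : v ∈ T.supp := by
    rw [hsupp]
    exact Set.mem_compl_singleton_iff.mpr (Ne.symm hxv)
  have hadjxv : G'.Adj x v := ((hN x (Or.inl rfl)).resolve_left hxv).symm
  have hNxz : ∀ z, G'.Adj x z → z = v ∨ G'.Adj v z := fun z h => hN z (Or.inr h)
  have hsupp' : insert x T.supp = (Set.univ : Set V) := by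
    rw [hsupp]
    ext z
    by_cases h : z = x <;> simp [h]
  rcases Nat.eq_zero_or_pos i with hi0 | hip
  · subst hi0
    have heq : T.insertAt 0 x v = T.spliceRoot x := by
      unfold RTree.insertAt RTree.spliceRoot
      rw [if_pos rfl]
    rw [heq]
    have hg := RTree.sr_good hwf hxs hGood hv hadjxv
    exact ⟨hsupp', good_isSearchTreeRec _ _ le_rfl hg⟩
  · have h0 : i ≠ 0 := by omega
    have h1 : i ≠ T.depthOf v + 1 := by omega
    have heq : T.insertAt i x v = T.splice x (T.ancAt v i) (T.ancAt v (i - 1)) := by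
      unfold RTree.insertAt RTree.splice
      rw [if_neg h0, if_neg h1]
    rw [heq]
    have hab := RTree.parent_ancAt hwf hv hip hi
    have hav := RTree.ancAt_anc hwf hv hi
    have hg := RTree.splice_good hwf hxs hab hGood hv hadjxv hNxz hav
    exact ⟨hsupp', good_isSearchTreeRec _ _ le_rfl hg⟩
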